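/- arXiv:2008.00594 — 2 statements merged into one kernel-verified Lean document; each statement's English description precedes it below -/
import Mathlib

section
/- Fix a natural number m ≥ 1. Then the sequence a_N := 1 - Σ_{k=0}^{m} (-1)^k · C(m,k) · (1 - k/N)^(N-1), defined for natural numbers N > m, converges to 1 - (1 - e^{-1})^m as N → ∞, where C(m,k) is the binomial coefficient and e is Euler's number. -/
open Filter

lemma key_tendsto (k : ℕ) :
    Tendsto (fun N : ℕ => (1 - (k : ℝ) / N) ^ (N - 1)) atTop (nhds (Real.exp (-k))) := by
  have h1 : Tendsto (fun N : ℕ => (1 + (-(k : ℝ)) / N) ^ N) atTop (nhds (Real.exp (-k))) :=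
    Real.tendsto_one_add_div_pow_exp (-(k : ℝ))
  have h2 : Tendsto (fun N : ℕ => (1 + (-(k : ℝ)) / N)) atTop (nhds 1) := by
    have := Tendsto.div_atTop (tendsto_const_nhds (x := (-(k : ℝ))))
      tendsto_natCast_atTop_atTop
    simpa using (tendsto_const_nhds (x := (1 : ℝ))).add this
  have h3 : Tendsto (fun N : ℕ => (1 + (-(k : ℝ)) / N) ^ N / (1 + (-(k : ℝ)) / N))
      atTop (nhds (Real.exp (-k))) := by
    simpa [Pi.div_def] using h1.div h2 one_ne_zero
  refine h3.congr' ?_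
  filter_upwards [eventually_gt_atTop k] with N hN
  have hNpos : (0 : ℝ) < N := by exact_mod_cast Nat.lt_of_le_of_lt (Nat.zero_le k) hN
  have hne : (1 : ℝ) + (-(k : ℝ)) / N ≠ 0 := by
    have : (k : ℝ) / N < 1 := by
      rw [div_lt_one hNpos]; exact_mod_cast hN
    intro h
    rw [neg_div, add_neg_eq_zero] at h
    simp [← h] at this
  have : (1 + (-(k : ℝ)) / N) ^ N = (1 + (-(k : ℝ)) / N) ^ (N - 1) * (1 + (-(k : ℝ)) / N) := by
    rw [← pow_succ, Nat.sub_add_cancel (Nat.one_le_iff_ne_zero.mpr (by omega))]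
  rw [this, mul_div_assoc, div_self hne, mul_one]
  ring_nf

theorem tendsto_inclusion_exclusion_sum (m : ℕ) (hm : 1 ≤ m) :
    Tendsto (fun N : ℕ =>
        1 - ∑ k ∈ Finset.range (m + 1),
          (-1 : ℝ) ^ k * (m.choose k) * (1 - (k : ℝ) / N) ^ (N - 1))
      atTop (nhds (1 - (1 - (Real.exp 1)⁻¹) ^ m)) := by
  have hsum : Tendsto (fun N : ℕ => ∑ k ∈ Finset.range (m + 1),
      (-1 : ℝ) ^ k * (m.choose k) * (1 - (k : ℝ) / N) ^ (N - 1)) atTop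
      (nhds (∑ k ∈ Finset.range (m + 1), (-1 : ℝ) ^ k * (m.choose k) * Real.exp (-k))) := by
    refine tendsto_finset_sum _ fun k _ => ?_
    exact (tendsto_const_nhds).mul (key_tendsto k)
  have heq : (∑ k ∈ Finset.range (m + 1), (-1 : ℝ) ^ k * (m.choose k) * Real.exp (-k))
      = (1 - (Real.exp 1)⁻¹) ^ m := by
    have := add_pow (-(Real.exp 1)⁻¹) 1 m
    rw [show -(Real.exp 1)⁻¹ + 1 = 1 - (Real.exp 1)⁻¹ by ring] at this
    rw [this]
    refine Finset.sum_congr rfl fun k _ => ?_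
    rw [Real.exp_neg, ← Real.exp_one_rpow (k : ℝ), Real.rpow_natCast]
    rw [neg_pow, ← inv_pow]
    ring
  rw [← heq]
  exact tendsto_const_nhds.sub hsum
end

section
/- Let m and N be natural numbers with 1 ≤ m and N ≥ m + 1, and let ξ be a real number with ξ ≥ m. Then the m-fold iterated integral over the cube [0, 1/ξ]^m of the function (μ_1, …, μ_m) ↦ (1 - μ_1 - ⋯ - μ_m)^(N-m-1) with respect to Lebesgue measure equals (1 / ((N-m)(N-m+1)⋯(N-1))) · Σ_{k=0}^{m} (-1)^k · C(m,k) · (1 - k/ξ)^(N-1), where C(m,k) is the binomial coefficient. -/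
open MeasureTheory

lemma pascal_sum (m : ℕ) (A : ℕ → ℝ) :
    ∑ k ∈ Finset.range (m + 1), (-1 : ℝ) ^ k * (m.choose k) * (A k - A (k + 1)) =
      ∑ k ∈ Finset.range (m + 1 + 1), (-1 : ℝ) ^ k * ((m + 1).choose k) * A k := by
  calc ∑ k ∈ Finset.range (m + 1), (-1 : ℝ) ^ k * (m.choose k) * (A k - A (k + 1))
      = (∑ k ∈ Finset.range (m + 1), (-1 : ℝ) ^ k * (m.choose k) * A k)
        - ∑ k ∈ Finset.range (m + 1), (-1 : ℝ) ^ k * (m.choose k) * A (k + 1) := by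
        rw [← Finset.sum_sub_distrib]
        exact Finset.sum_congr rfl fun k _ => by ring
    _ = ((∑ k ∈ Finset.range m, (-1 : ℝ) ^ (k + 1) * (m.choose (k + 1)) * A (k + 1)) + A 0)
        - ∑ k ∈ Finset.range (m + 1), (-1 : ℝ) ^ k * (m.choose k) * A (k + 1) := by
        rw [Finset.sum_range_succ' (fun k => (-1 : ℝ) ^ k * (m.choose k) * A k) m]
        norm_num
    _ = ((∑ k ∈ Finset.range (m + 1), (-1 : ℝ) ^ (k + 1) * (m.choose (k + 1)) * A (k + 1)) + A 0)
        - ∑ k ∈ Finset.range (m + 1), (-1 : ℝ) ^ k * (m.choose k) * A (k + 1) := by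
        rw [Finset.sum_range_succ (fun k => (-1 : ℝ) ^ (k + 1) * (m.choose (k + 1)) * A (k + 1)) m]
        simp [Nat.choose_succ_self]
    _ = (∑ k ∈ Finset.range (m + 1), (-1 : ℝ) ^ (k + 1) * (((m + 1).choose (k + 1))) * A (k + 1)) + A 0 := by
        rw [add_sub_right_comm, ← Finset.sum_sub_distrib]
        congr 1
        refine Finset.sum_congr rfl fun k _ => ?_
        have : ((m + 1).choose (k + 1) : ℝ) = m.choose k + m.choose (k + 1) := by
          rw [Nat.choose_succ_succ]; push_cast; ring
        rw [this]; ring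
    _ = ∑ k ∈ Finset.range (m + 1 + 1), (-1 : ℝ) ^ k * ((m + 1).choose k) * A k := by
        rw [Finset.sum_range_succ' (fun k => (-1 : ℝ) ^ k * ((m + 1).choose k) * A k) (m + 1)]
        norm_num

lemma interval_int (d a : ℝ) (q : ℕ) :
    ∫ t in (0:ℝ)..a, (d - t) ^ q = (d ^ (q + 1) - (d - a) ^ (q + 1)) / (q + 1) := by
  rw [intervalIntegral.integral_comp_sub_left (fun x => x ^ q) d, integral_pow]
  rw [sub_zero]

lemma cube_key (p : ℕ) (a : ℝ) (ha : 0 ≤ a) :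
    ∀ (m : ℕ) (c : ℝ),
      (∫ μ : Fin m → ℝ in Set.univ.pi (fun _ => Set.Icc (0 : ℝ) a),
          (c - ∑ i, μ i) ^ p) =
        (1 / ∏ j ∈ Finset.range m, ((p : ℝ) + 1 + j)) *
          ∑ k ∈ Finset.range (m + 1),
            (-1 : ℝ) ^ k * (m.choose k) * (c - (k : ℝ) * a) ^ (p + m) := by
  intro m
  induction m with
  | zero =>
    intro c
    have h1 : (Set.univ.pi fun _ : Fin 0 => Set.Icc (0:ℝ) a) = Set.univ := by
      ext x; simp
    rw [h1, MeasureTheory.setIntegral_univ]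
    simp [volume_pi, integral_const, Measure.real, Measure.pi_empty_univ]
  | succ m ih =>
    intro c
    rw [← MeasureTheory.integral_indicator (MeasurableSet.univ_pi fun _ => measurableSet_Icc)]
    rw [volume_pi, ← ((measurePreserving_piFinSuccAbove (fun _ : Fin (m+1) => (volume : Measure ℝ)) 0).symm).integral_comp']
    simp_rw [MeasurableEquiv.piFinSuccAbove_symm_apply, Fin.insertNthEquiv, Equiv.coe_fn_mk,
      Fin.insertNth_zero, cast_eq]
    have hfun : (fun x : ℝ × (Fin m → ℝ) =>
        (Set.univ.pi fun _ : Fin (m+1) => Set.Icc (0:ℝ) a).indicator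
          (fun μ => (c - ∑ i : Fin (m+1), μ i) ^ p) (Fin.cons x.1 fun j => x.2 j)) =
        (Set.Icc (0:ℝ) a ×ˢ Set.univ.pi fun _ : Fin m => Set.Icc (0:ℝ) a).indicator
          (fun x => (c - (x.1 + ∑ i, x.2 i)) ^ p) := by
      funext x
      have hx : (Fin.cons x.1 (fun j => x.2 j) ∈ Set.univ.pi fun _ : Fin (m+1) => Set.Icc (0:ℝ) a) ↔
          x ∈ Set.Icc (0:ℝ) a ×ˢ Set.univ.pi fun _ : Fin m => Set.Icc (0:ℝ) a := by
        simp only [Set.mem_pi, Set.mem_Icc, Set.mem_prod, Set.mem_univ, true_implies,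
          Fin.forall_fin_succ, Fin.cons_zero, Fin.cons_succ, forall_and]
        tauto
      by_cases h : x ∈ Set.Icc (0:ℝ) a ×ˢ Set.univ.pi fun _ : Fin m => Set.Icc (0:ℝ) a
      · rw [Set.indicator_of_mem (hx.mpr h), Set.indicator_of_mem h]
        simp [Fin.sum_univ_succ]
      · rw [Set.indicator_of_notMem (fun hc => h (hx.mp hc)), Set.indicator_of_notMem h]
    rw [hfun]
    rw [show (Measure.pi fun _ : Fin m => (volume : Measure ℝ)) = volume from (volume_pi).symm]
    rw [MeasureTheory.integral_indicator (measurableSet_Icc.prod (MeasurableSet.univ_pi fun _ => measurableSet_Icc))]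
    rw [MeasureTheory.setIntegral_prod]
    swap
    · rw [← Measure.volume_eq_prod]
      apply ContinuousOn.integrableOn_compact (isCompact_Icc.prod (isCompact_univ_pi fun _ => isCompact_Icc))
      exact Continuous.continuousOn (by fun_prop)
    -- inner integral via ih
    have hinner : ∀ t : ℝ,
        (∫ y : Fin m → ℝ in Set.univ.pi fun _ : Fin m => Set.Icc (0:ℝ) a,
          (c - (t + ∑ i, y i)) ^ p) =
        (1 / ∏ j ∈ Finset.range m, ((p : ℝ) + 1 + j)) *
          ∑ k ∈ Finset.range (m + 1),
            (-1 : ℝ) ^ k * (m.choose k) * ((c - (k : ℝ) * a) - t) ^ (p + m) := by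
      intro t
      simp_rw [sub_add_eq_sub_sub]
      rw [ih (c - t)]
      congr 1
      exact Finset.sum_congr rfl fun k _ => by rw [sub_right_comm]
    simp only [hinner]
    rw [MeasureTheory.integral_Icc_eq_integral_Ioc, ← intervalIntegral.integral_of_le ha]
    rw [intervalIntegral.integral_const_mul]
    rw [intervalIntegral.integral_finset_sum (fun k _ => by
      apply Continuous.intervalIntegrable; fun_prop)]
    simp_rw [intervalIntegral.integral_const_mul, interval_int]
    -- now pure algebra
    have h1 : ∑ k ∈ Finset.range (m + 1),
        (-1 : ℝ) ^ k * (m.choose k) *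
          (((c - (k : ℝ) * a) ^ (p + m + 1) - ((c - (k : ℝ) * a) - a) ^ (p + m + 1)) / ((p + m : ℕ) + 1)) =
        (∑ k ∈ Finset.range (m + 1), (-1 : ℝ) ^ k * (m.choose k) *
          ((c - (k : ℝ) * a) ^ (p + (m + 1)) - (c - ((k + 1 : ℕ) : ℝ) * a) ^ (p + (m + 1)))) / ((p : ℝ) + m + 1) := by
      rw [Finset.sum_div]
      refine Finset.sum_congr rfl fun k _ => ?_
      push_cast
      ring
    rw [h1]
    rw [pascal_sum m (fun k => (c - (k : ℝ) * a) ^ (p + (m + 1)))]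
    rw [Finset.prod_range_succ]
    set S := ∑ k ∈ Finset.range (m + 1 + 1), (-1:ℝ) ^ k * ((m + 1).choose k : ℝ) * (c - (k:ℝ) * a) ^ (p + (m + 1)) with hS
    set P := ∏ j ∈ Finset.range m, ((p:ℝ) + 1 + (j:ℝ)) with hP
    have hP0 : P ≠ 0 := by rw [hP]; positivity
    have hq0 : ((p:ℝ) + 1 + (m:ℝ)) ≠ 0 := by positivity
    field_simp
    ring

theorem cube_integral_inclusion_exclusion (m N : ℕ) (hm : 1 ≤ m) (hN : m + 1 ≤ N)
    (ξ : ℝ) (hξ : (m : ℝ) ≤ ξ) :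
    (∫ μ : Fin m → ℝ in Set.univ.pi (fun _ => Set.Icc (0 : ℝ) (1 / ξ)),
        (1 - ∑ i, μ i) ^ (N - m - 1)) =
      (1 / ∏ j ∈ Finset.range m, ((N : ℝ) - m + j)) *
        ∑ k ∈ Finset.range (m + 1),
          (-1 : ℝ) ^ k * (m.choose k) * (1 - (k : ℝ) / ξ) ^ (N - 1) := by
  have hξ0 : (0 : ℝ) < ξ := lt_of_lt_of_le (by exact_mod_cast hm) hξ
  have ha : (0 : ℝ) ≤ 1 / ξ := by positivity
  rw [cube_key (N - m - 1) (1 / ξ) ha m 1]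
  have hcast : ((N - m - 1 : ℕ) : ℝ) = (N : ℝ) - m - 1 := by
    have h1 : m + 1 ≤ N := hN
    rw [Nat.sub_sub, Nat.cast_sub (by omega : m + 1 ≤ N)]
    push_cast; ring
  congr 1
  · congr 1
    refine Finset.prod_congr rfl fun j _ => ?_
    rw [hcast]; ring
  · refine Finset.sum_congr rfl fun k _ => ?_
    rw [show N - m - 1 + m = N - 1 from by omega, mul_one_div]
end
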